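/- For k ∈ ℤ define u_k = (2+√3)^k − (2−√3)^k. Let Δ^L > 0, Δ^R > 0 and set a = −(1/2)·Δ^L/(Δ^R+Δ^L) and b = −(1/2)·Δ^R/(Δ^R+Δ^L). For n ≥ 1 define a_{n,n} = (−1)^{n-1}·u_1·a·u_n/D_n and b_{n,n} = (−1)^{n-1}·u_1·b·u_n/D_n, where D_n = u_n·u_n + u_n·u_{n-1}·a + u_n·u_{n-1}·b. Then D_n ≠ 0 for all n ≥ 1 and, as n → ∞, a_{n,n}·(−(2+√3))^n → −4·a and b_{n,n}·(−(2+√3))^n → −4·b; equivalently, a_{n,n} is asymptotically equivalent to (−(2−√3))^n·(−4·a_{1,1}) and b_{n,n} to (−(2−√3))^n·(−4·b_{1,1}) with a_{1,1} = a, b_{1,1} = b. -/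

import Mathlib

/-- The sequence `u_k = (2+√3)^k − (2−√3)^k`, indexed by the integers. -/
noncomputable def uSeq (k : ℤ) : ℝ :=
  (2 + Real.sqrt 3) ^ k - (2 - Real.sqrt 3) ^ k


private lemma two_sided_fact_aux (q : ℝ) (hq : q ≠ 0) (m : ℕ) :
    ((q⁻¹) ^ (m + 1) - q ^ (m + 1)) - ((q⁻¹) ^ m - q ^ m) / 2 =
      (q⁻¹) ^ (m + 1) * ((1 - q / 2) + (q ^ 2) ^ (m + 1) * (1 / (2 * q) - 1)) := by
  simp only [inv_pow]
  field_simp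
  ring

set_option maxHeartbeats 1000000 in
/-- **Asymptotic behavior of the two-sided extension coefficients
`a_{n,n}`, `b_{n,n}` when the same (large) number of cells is used on both
sides of the interface.** `D_n ≠ 0` for `n ≥ 1`, and
`a_{n,n}·(−(2+√3))^n → −4a`, `b_{n,n}·(−(2+√3))^n → −4b` as `n → ∞`;
equivalently `a_{n,n} ∼ (−(2−√3))^n·(−4 a_{1,1})` and
`b_{n,n} ∼ (−(2−√3))^n·(−4 b_{1,1})`. -/
theorem two_sided_coefficients_asymptotics
    (ΔL ΔR : ℝ) (hL : 0 < ΔL) (hR : 0 < ΔR)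
    (a b : ℝ)
    (ha : a = -(1/2) * ΔL / (ΔR + ΔL))
    (hb : b = -(1/2) * ΔR / (ΔR + ΔL))
    (D A B : ℕ → ℝ)
    (hD : ∀ n : ℕ, 1 ≤ n →
      D n = uSeq (n : ℤ) * uSeq (n : ℤ) + uSeq (n : ℤ) * uSeq ((n : ℤ) - 1) * a
              + uSeq (n : ℤ) * uSeq ((n : ℤ) - 1) * b)
    (hA : ∀ n : ℕ, 1 ≤ n →
      A n = (-1 : ℝ) ^ (n - 1) * uSeq 1 * a * uSeq (n : ℤ) / D n)
    (hB : ∀ n : ℕ, 1 ≤ n →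
      B n = (-1 : ℝ) ^ (n - 1) * uSeq 1 * b * uSeq (n : ℤ) / D n) :
    (∀ n : ℕ, 1 ≤ n → D n ≠ 0) ∧
    Filter.Tendsto (fun n : ℕ => A n * (-(2 + Real.sqrt 3)) ^ n)
      Filter.atTop (nhds (-4 * a)) ∧
    Filter.Tendsto (fun n : ℕ => B n * (-(2 + Real.sqrt 3)) ^ n)
      Filter.atTop (nhds (-4 * b)) := by
  have hs3 : (Real.sqrt 3) ^ 2 = 3 := Real.sq_sqrt (by norm_num)
  set s := Real.sqrt 3 with hsdef
  have hsnn : 0 ≤ s := Real.sqrt_nonneg 3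
  have hs1 : 1 < s := by nlinarith
  have hslt : s < 2 := by nlinarith
  set p := 2 + s with hp
  set q := 2 - s with hq
  have hq0 : 0 < q := by rw [hq]; linarith
  have hq1 : q < 1 := by rw [hq]; linarith
  have hp1 : 1 < p := by rw [hp]; linarith
  have hp0 : 0 < p := by linarith
  have hqp : q < p := by rw [hp, hq]; linarith
  have hpq : p * q = 1 := by rw [hp, hq]; linear_combination -hs3
  have hS : (0:ℝ) < ΔR + ΔL := by linarith
  have hab : a + b = -(1/2) := by
    rw [ha, hb]; field_simp; ring
  -- uSeq on naturals
  have hu : ∀ m : ℕ, uSeq (m : ℤ) = p ^ m - q ^ m := by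
    intro m
    rw [hp, hq, hsdef]
    simp [uSeq, zpow_natCast]
  have hu1 : uSeq 1 = 2 * s := by
    rw [hsdef]
    simp [uSeq]
    ring
  clear_value q p s
  -- positivity facts
  have hunpos : ∀ m : ℕ, 1 ≤ m → 0 < p ^ m - q ^ m := by
    intro m hm
    have := pow_lt_pow_left₀ hqp hq0.le (by omega : m ≠ 0)
    linarith
  have humnn : ∀ m : ℕ, 0 ≤ p ^ m - q ^ m := by
    intro m
    have := pow_le_pow_left₀ hq0.le hqp.le m
    linarith
  have hmono : ∀ m : ℕ, p ^ m - q ^ m ≤ p ^ (m + 1) - q ^ (m + 1) := by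
    intro m
    have h1 : p ^ m ≤ p ^ (m + 1) := pow_le_pow_right₀ hp1.le (by omega)
    have h2 : q ^ (m + 1) ≤ q ^ m := pow_le_pow_of_le_one hq0.le hq1.le (by omega)
    linarith
  -- D factorization
  have hDn : ∀ m : ℕ, D (m + 1) =
      (p ^ (m + 1) - q ^ (m + 1)) *
        ((p ^ (m + 1) - q ^ (m + 1)) - (p ^ m - q ^ m) / 2) := by
    intro m
    rw [hD (m + 1) (by omega)]
    have h1 : (((m + 1 : ℕ) : ℤ)) - 1 = (m : ℤ) := by push_cast; ring
    rw [h1, hu (m + 1), hu m]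
    linear_combination ((p ^ (m + 1) - q ^ (m + 1)) * (p ^ m - q ^ m)) * hab
  have hdnpos : ∀ m : ℕ, 0 < (p ^ (m + 1) - q ^ (m + 1)) - (p ^ m - q ^ m) / 2 := by
    intro m
    have h1 := hunpos (m + 1) (by omega)
    have h2 := hmono m
    have h3 := humnn m
    linarith
  have hDpos : ∀ n : ℕ, 1 ≤ n → 0 < D n := by
    intro n hn
    obtain ⟨m, rfl⟩ : ∃ m, n = m + 1 := ⟨n - 1, by omega⟩
    rw [hDn m]
    exact mul_pos (hunpos (m + 1) (by omega)) (hdnpos m)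
  -- the factorization of the denominator
  have hpinv : p = q⁻¹ := by
    rw [inv_eq_one_div, eq_div_iff hq0.ne']; exact hpq
  have hfact : ∀ m : ℕ,
      (p ^ (m + 1) - q ^ (m + 1)) - (p ^ m - q ^ m) / 2 =
        p ^ (m + 1) * ((1 - q / 2) + (q ^ 2) ^ (m + 1) * (1 / (2 * q) - 1)) := by
    intro m
    rw [hpinv]
    exact two_sided_fact_aux q hq0.ne' m
  have hCpos : ∀ m : ℕ, 0 < (1 - q / 2) + (q ^ 2) ^ m * (1 / (2 * q) - 1) := by
    intro m
    cases m with
    | zero =>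
      have he : (1 - q / 2) + (q ^ 2) ^ 0 * (1 / (2 * q) - 1) = (1 - q ^ 2) / (2 * q) := by
        rw [pow_zero]; field_simp; ring
      rw [he]
      exact div_pos (by nlinarith) (by linarith)
    | succ m =>
      have h := hdnpos m
      rw [hfact m] at h
      have hpp : (0:ℝ) < p ^ (m + 1) := pow_pos hp0 _
      nlinarith
  -- main limit lemma
  have main : ∀ (x : ℝ) (X : ℕ → ℝ),
      (∀ n : ℕ, 1 ≤ n →
        X n = (-1 : ℝ) ^ (n - 1) * uSeq 1 * x * uSeq (n : ℤ) / D n) →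
      Filter.Tendsto (fun n : ℕ => X n * (-p) ^ n) Filter.atTop
        (nhds (-4 * x)) := by
    intro x X hX
    have h0 : Filter.Tendsto (fun n : ℕ => (q ^ 2) ^ n) Filter.atTop (nhds 0) :=
      tendsto_pow_atTop_nhds_zero_of_lt_one (by positivity) (by nlinarith)
    have hc : Filter.Tendsto
        (fun n : ℕ => (1 - q / 2) + (q ^ 2) ^ n * (1 / (2 * q) - 1))
        Filter.atTop (nhds (1 - q / 2)) := by
      have h := (h0.mul_const (1 / (2 * q) - 1)).const_add (1 - q / 2)
      simpa using h
    have hne : (1 - q / 2) ≠ 0 := by rw [hq]; intro h; nlinarith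
    have hlim : Filter.Tendsto
        (fun n : ℕ => (-(uSeq 1) * x) /
          ((1 - q / 2) + (q ^ 2) ^ n * (1 / (2 * q) - 1)))
        Filter.atTop (nhds ((-(uSeq 1) * x) / (1 - q / 2))) :=
      tendsto_const_nhds.div hc hne
    have hval : (-(uSeq 1) * x) / (1 - q / 2) = -4 * x := by
      rw [hu1, hq]
      have hsne : s ≠ 0 := by linarith
      field_simp
      ring_nf
      field_simp
    rw [hval] at hlim
    refine hlim.congr' ?_
    filter_upwards [Filter.eventually_ge_atTop 1] with n hn
    obtain ⟨m, rfl⟩ : ∃ m, n = m + 1 := ⟨n - 1, by omega⟩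
    have hun : (0:ℝ) < p ^ (m + 1) - q ^ (m + 1) := hunpos (m + 1) (by omega)
    have hpp : (0:ℝ) < p ^ (m + 1) := pow_pos hp0 _
    have hC := hCpos (m + 1)
    have hsign : ((-1 : ℝ)) ^ m * (-1) ^ (m + 1) = -1 := by
      rw [← pow_add]
      have h2 : m + (m + 1) = 2 * m + 1 := by omega
      rw [h2, pow_succ, pow_mul]
      norm_num
    have hXn : X (m + 1) * (-p) ^ (m + 1) =
        -(uSeq 1) * x * (p ^ (m + 1) - q ^ (m + 1)) * p ^ (m + 1) / D (m + 1) := by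
      rw [hX (m + 1) (by omega), hu (m + 1)]
      rw [show (-p) ^ (m + 1) = (-1 : ℝ) ^ (m + 1) * p ^ (m + 1) by
        rw [← neg_one_mul, mul_pow]]
      simp only [Nat.add_sub_cancel]
      rw [div_mul_eq_mul_div]
      congr 1
      linear_combination (uSeq 1 * x * (p ^ (m + 1) - q ^ (m + 1)) * p ^ (m + 1)) * hsign
    rw [hXn, hDn m, hfact m]
    rw [div_eq_div_iff hC.ne' (mul_ne_zero hun.ne' (mul_ne_zero hpp.ne' hC.ne'))]
    ring
  refine ⟨fun n hn => (hDpos n hn).ne', main a A hA, main b B hB⟩
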